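/- For all $a$ with $0<a<1$: $|1-2a-8a^2+8a^3-8a^4-2a^5+a^6|<|2-a-4a^2+16a^3-4a^4-a^5+2a^6|$, and hence the unique zero $z=-\frac{1-2a-8a^2+8a^3-8a^4-2a^5+a^6}{2-a-4a^2+16a^3-4a^4-a^5+2a^6}$ of the linear polynomial $p_3(z)=(2-a-4a^2+16a^3-4a^4-a^5+2a^6)z+(1-2a-8a^2+8a^3-8a^4-2a^5+a^6)$ lies in the open unit disk. -/
import Mathlib


/-- For `0 < a < 1`, `|1-2a-8a²+8a³-8a⁴-2a⁵+a⁶| < |2-a-4a²+16a³-4a⁴-a⁵+2a⁶|`, so the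
zero of the linear polynomial `p₃` lies in the open unit disk. -/
theorem stmt_13 (a : ℝ) (h0 : 0 < a) (h1 : a < 1) :
    |1 - 2 * a - 8 * a ^ 2 + 8 * a ^ 3 - 8 * a ^ 4 - 2 * a ^ 5 + a ^ 6| <
      |2 - a - 4 * a ^ 2 + 16 * a ^ 3 - 4 * a ^ 4 - a ^ 5 + 2 * a ^ 6| ∧
    |(-(1 - 2 * a - 8 * a ^ 2 + 8 * a ^ 3 - 8 * a ^ 4 - 2 * a ^ 5 + a ^ 6)) /
        (2 - a - 4 * a ^ 2 + 16 * a ^ 3 - 4 * a ^ 4 - a ^ 5 + 2 * a ^ 6)| < 1 := by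
  set N := 1 - 2 * a - 8 * a ^ 2 + 8 * a ^ 3 - 8 * a ^ 4 - 2 * a ^ 5 + a ^ 6 with hN
  set D := 2 - a - 4 * a ^ 2 + 16 * a ^ 3 - 4 * a ^ 4 - a ^ 5 + 2 * a ^ 6 with hD
  have hq : 0 < a ^ 4 + a ^ 3 - 3 * a ^ 2 + a + 1 := by nlinarith [sq_nonneg (a^2 - 1), sq_nonneg (a - 1), sq_nonneg a, mul_pos h0 h0]
  have hsum : 0 < D + N := by
    have : D + N = 3 * ((1 - a) ^ 2 * (a ^ 4 + a ^ 3 - 3 * a ^ 2 + a + 1)) := by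
      rw [hN, hD]; ring
    rw [this]
    have h1a : 0 < (1 - a) ^ 2 := pow_pos (by linarith) 2
    nlinarith [mul_pos h1a hq]
  have hdiff : 0 < D - N := by
    rw [hN, hD]; nlinarith [pow_pos h0 3, pow_pos h0 5, sq_nonneg a]
  have hDpos : 0 < D := by linarith
  have habs : |N| < |D| := by
    rw [abs_of_pos hDpos, abs_lt]
    constructor <;> linarith
  refine ⟨habs, ?_⟩
  rw [abs_div, abs_neg, div_lt_one (lt_of_le_of_lt (abs_nonneg N) habs)]
  exact habs
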